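/- Let G = (V,E) be a finite simple graph, ≺ a linear order on V, and S ⊆ V. Then the internal inequality ∑_{u∈S} ∑_{v∈S, v≺u, uv∉E} x_{(v,u)} ≤ |S| − χ(G[S]) is valid for COL≺(G), i.e., it is satisfied by every point of COL≺(G) (equivalently, by the representative vector of every proper coloring of G). -/

import Mathlib

open scoped Classical

/-- `(u, v)` is an arc of `G` w.r.t. the order `lt`: `u ≺ v` and `uv ∉ E`. -/
abbrev IsArcPair {V : Type*} (G : SimpleGraph V) (lt : V → V → Prop) (p : V × V) : Prop :=
  lt p.1 p.2 ∧ ¬ G.Adj p.1 p.2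

/-- The set of arcs of `G` (ordered non-edges), as a type. -/
abbrev Arc {V : Type*} (G : SimpleGraph V) (lt : V → V → Prop) : Type _ :=
  {p : V × V // IsArcPair G lt p}

/-- A proper coloring of a graph, as a color function. -/
def ProperColoring {W : Type*} (H : SimpleGraph W) (c : W → ℕ) : Prop :=
  ∀ u v, H.Adj u v → c u ≠ c v

/-- `u` is the `lt`-least element of its color class under `c`. -/
def IsClassRep {V : Type*} (lt : V → V → Prop) (c : V → ℕ) (u : V) : Prop :=
  ∀ w, c w = c u → u = w ∨ lt u w

/-- The representative vector of a coloring `c`: `x (u,v) = 1` iff `u` and `v` have the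
same color and `u` is the `lt`-least element of that color class. -/
noncomputable def repVec {V : Type*} (G : SimpleGraph V) (lt : V → V → Prop) (c : V → ℕ) :
    Arc G lt → ℝ := fun a =>
  if c a.1.1 = c a.1.2 ∧ IsClassRep lt c a.1.1 then 1 else 0

/-- The coloring polytope: convex hull of representative vectors of proper colorings. -/
noncomputable def COL {V : Type*} (G : SimpleGraph V) (lt : V → V → Prop) :
    Set (Arc G lt → ℝ) :=
  convexHull ℝ {x | ∃ c : V → ℕ, ProperColoring G c ∧ x = repVec G lt c}

/-- A stable (independent) set of a graph. -/
def IsStableSet {W : Type*} (H : SimpleGraph W) (s : Set W) : Prop :=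
  ∀ a ∈ s, ∀ b ∈ s, ¬ H.Adj a b

/-- The stable set polytope of a graph. -/
noncomputable def STAB {W : Type*} (H : SimpleGraph W) : Set (W → ℝ) :=
  convexHull ℝ {x | ∃ s : Set W, IsStableSet H s ∧ x = s.indicator 1}

/-- The Cornaz–Jost graph `R≺(G)`: vertices are the arcs of `G`; two distinct arcs
`(a,b)` and `(c,d)` are adjacent iff they share an endpoint and it is not the case that
`a = c` and `bd ∉ E`. -/
def RGraph {V : Type*} (G : SimpleGraph V) (lt : V → V → Prop) : SimpleGraph (Arc G lt) where
  Adj p q := p ≠ q ∧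
    (p.1.1 = q.1.1 ∨ p.1.1 = q.1.2 ∨ p.1.2 = q.1.1 ∨ p.1.2 = q.1.2) ∧
    ¬ (p.1.1 = q.1.1 ∧ ¬ G.Adj p.1.2 q.1.2)
  symm := by
    refine ⟨?_⟩
    rintro p q ⟨h1, h2, h3⟩
    refine ⟨h1.symm, ?_, fun hc => h3 ⟨hc.1.symm, fun h => hc.2 (G.adj_symm h)⟩⟩
    rcases h2 with h | h | h | h
    · exact Or.inl h.symm
    · exact Or.inr (Or.inr (Or.inl h.symm))
    · exact Or.inr (Or.inl h.symm)
    · exact Or.inr (Or.inr (Or.inr h.symm))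
  loopless := ⟨fun p h => h.1 rfl⟩

/-- The line graph of the complement of `G`, with the edges of the complement
identified with the arcs of `G`: two distinct arcs are adjacent iff they share an endpoint. -/
def lineGraphArc {V : Type*} (G : SimpleGraph V) (lt : V → V → Prop) :
    SimpleGraph (Arc G lt) where
  Adj p q := p ≠ q ∧
    (p.1.1 = q.1.1 ∨ p.1.1 = q.1.2 ∨ p.1.2 = q.1.1 ∨ p.1.2 = q.1.2)
  symm := by
    refine ⟨?_⟩
    rintro p q ⟨h1, h2⟩
    refine ⟨h1.symm, ?_⟩
    rcases h2 with h | h | h | h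
    · exact Or.inl h.symm
    · exact Or.inr (Or.inr (Or.inl h.symm))
    · exact Or.inr (Or.inl h.symm)
    · exact Or.inr (Or.inr (Or.inr h.symm))
  loopless := ⟨fun p h => h.1 rfl⟩

/-- The independence number of `H` is at most 2. -/
def AlphaLeTwo {W : Type*} (H : SimpleGraph W) : Prop :=
  ∀ s : Set W, IsStableSet H s → s.ncard ≤ 2

/-- The chromatic number of a graph, as a natural number. -/
noncomputable def chromNum {W : Type*} (H : SimpleGraph W) : ℕ :=
  sInf {n : ℕ | ∃ c : W → ℕ, ProperColoring H c ∧ ∀ v, c v < n}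

/-- `H` contains a copy of `F` as a (not necessarily induced) subgraph. -/
def ContainsCopy {α β : Type*} (F : SimpleGraph α) (H : SimpleGraph β) : Prop :=
  ∃ f : α → β, Function.Injective f ∧ ∀ a b, F.Adj a b → H.Adj (f a) (f b)

/-- `H` contains an induced copy of `F`. -/
def ContainsInducedCopy {α β : Type*} (F : SimpleGraph α) (H : SimpleGraph β) : Prop :=
  ∃ f : α → β, Function.Injective f ∧ ∀ a b, H.Adj (f a) (f b) ↔ F.Adj a b

/-- The paw: a triangle `{0,1,2}` plus the vertex `3` adjacent only to `2`. -/
def pawGraph : SimpleGraph (Fin 4) :=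
  SimpleGraph.fromEdgeSet {s(0, 1), s(0, 2), s(1, 2), s(2, 3)}

/-- The kite: the paw plus the vertex `4` adjacent only to `3` (the paw's degree-1 vertex). -/
def kiteGraph : SimpleGraph (Fin 5) :=
  SimpleGraph.fromEdgeSet {s(0, 1), s(0, 2), s(1, 2), s(2, 3), s(3, 4)}

/-- The claw `K_{1,3}`: vertex `0` adjacent to `1`, `2`, `3`. -/
def clawGraph : SimpleGraph (Fin 4) :=
  SimpleGraph.fromEdgeSet {s(0, 1), s(0, 2), s(0, 3)}

/-- A graph is claw-free if it has no induced copy of `K_{1,3}`. -/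
def ClawFree {W : Type*} (H : SimpleGraph W) : Prop :=
  ¬ ContainsInducedCopy clawGraph H

/-- A graph is quasi-line if the neighborhood of every vertex can be partitioned
into two cliques. -/
def QuasiLine {W : Type*} (H : SimpleGraph W) : Prop :=
  ∀ v : W, ∃ K₁ K₂ : Set W, Disjoint K₁ K₂ ∧ K₁ ∪ K₂ = {w | H.Adj v w} ∧
    H.IsClique K₁ ∧ H.IsClique K₂

/-- A graph is hypomatchable if deleting any vertex leaves a graph with a perfect matching. -/
def Hypomatchable {W : Type*} (H : SimpleGraph W) : Prop :=
  ∀ u : W, ∃ M : (H.induce {v | v ≠ u}).Subgraph, M.IsPerfectMatching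

/-- A graph is 2-connected: connected, at least 3 vertices, and deleting any vertex
leaves it connected. -/
def TwoConnected {W : Type*} [Fintype W] (H : SimpleGraph W) : Prop :=
  H.Connected ∧ 3 ≤ Fintype.card W ∧ ∀ u : W, (H.induce {v | v ≠ u}).Connected

/-- A set of arcs is a matching of the complement of `G`: no two distinct arcs share
an endpoint. -/
def IsMatchingArcSet {V : Type*} (G : SimpleGraph V) (lt : V → V → Prop)
    (m : Set (Arc G lt)) : Prop :=
  ∀ p ∈ m, ∀ q ∈ m, p ≠ q →
    ¬ (p.1.1 = q.1.1 ∨ p.1.1 = q.1.2 ∨ p.1.2 = q.1.1 ∨ p.1.2 = q.1.2)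

/-- The matching polytope of the complement of `G`, viewed in `ℝ^A` via the
identification of edges of the complement with arcs. -/
noncomputable def MATCHarcs {V : Type*} (G : SimpleGraph V) (lt : V → V → Prop) :
    Set (Arc G lt → ℝ) :=
  convexHull ℝ {x | ∃ m : Set (Arc G lt), IsMatchingArcSet G lt m ∧ x = m.indicator 1}

/-- Restriction of a vector indexed by arcs of `G` to the arcs of an induced subgraph. -/
def restrictVec {V : Type*} (G : SimpleGraph V) (lt : V → V → Prop) (W : Set V)
    (x : Arc G lt → ℝ) : Arc (G.induce W) (fun a b => lt ↑a ↑b) → ℝ :=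
  fun a => x ⟨(↑a.1.1, ↑a.1.2), a.2.1, a.2.2⟩


/-- Existence of a `lt`-minimum of a nonempty finset, for a strict total order. -/
lemma exists_lt_min {V : Type*} (lt : V → V → Prop) [DecidableRel lt]
    (hlt : IsStrictTotalOrder V lt) (s : Finset V) (hs : s.Nonempty) :
    ∃ m ∈ s, ∀ v ∈ s, m = v ∨ lt m v := by
  letI := hlt
  letI : LinearOrder V := linearOrderOfSTO lt
  exact ⟨s.min' hs, s.min'_mem hs, fun v hv => s.min'_le v hv⟩

/-- The key lemma: the internal inequality holds at the representative vector of
any proper coloring. -/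
lemma key_lemma {V : Type*} [Fintype V] [DecidableEq V]
    (G : SimpleGraph V) [DecidableRel G.Adj]
    (lt : V → V → Prop) [DecidableRel lt] (hlt : IsStrictTotalOrder V lt)
    (S : Finset V) (c : V → ℕ) (hc : ProperColoring G c) :
    (∑ u ∈ S, ∑ v ∈ S, if h : IsArcPair G lt (v, u) then repVec G lt c ⟨(v, u), h⟩ else 0) ≤
      (S.card : ℝ) - chromNum (G.induce (↑S : Set V)) := by
  classical
  letI := hlt
  set T : Finset ℕ := S.image c with hT
  -- choose lt-minimum of each color class within S
  have hmin : ∀ i ∈ T, ∃ m, (m ∈ S ∧ c m = i) ∧ ∀ v ∈ S, c v = i → m = v ∨ lt m v := by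
    intro i hi
    have hne : (S.filter (fun v => c v = i)).Nonempty := by
      obtain ⟨u, hu, rfl⟩ := Finset.mem_image.1 hi
      exact ⟨u, Finset.mem_filter.2 ⟨hu, rfl⟩⟩
    obtain ⟨m, hm, hmin⟩ := exists_lt_min lt hlt _ hne
    refine ⟨m, ⟨(Finset.mem_filter.1 hm).1, (Finset.mem_filter.1 hm).2⟩, fun v hv hcv => ?_⟩
    exact hmin v (Finset.mem_filter.2 ⟨hv, hcv⟩)
  choose m hm1 hm2 using hmin
  set M : Finset V := T.attach.image (fun i => m i.1 i.2) with hM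
  have hMS : M ⊆ S := by
    intro u hu
    obtain ⟨i, -, rfl⟩ := Finset.mem_image.1 hu
    exact (hm1 i.1 i.2).1
  have hMcard : M.card = T.card := by
    rw [hM]
    rw [Finset.card_image_of_injOn, Finset.card_attach]
    intro i _ j _ hij
    have : i.1 = j.1 := by
      rw [← (hm1 i.1 i.2).2, ← (hm1 j.1 j.2).2]
      exact congrArg c hij
    exact Subtype.ext this
  -- rewrite each term as an indicator
  have hterm : ∀ u v, (if h : IsArcPair G lt (v, u) then repVec G lt c ⟨(v, u), h⟩ else 0)
      = if (IsArcPair G lt (v, u) ∧ c v = c u ∧ IsClassRep lt c v) then (1 : ℝ) else 0 := by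
    intro u v
    by_cases h : IsArcPair G lt (v, u)
    · by_cases h2 : c v = c u ∧ IsClassRep lt c v <;> simp [repVec, h, h2]
    · simp [h]
  -- the inner sum is the cardinality of a filter
  have hinner : ∀ u, (∑ v ∈ S, if h : IsArcPair G lt (v, u) then repVec G lt c ⟨(v, u), h⟩ else 0)
      = ((S.filter (fun v => IsArcPair G lt (v, u) ∧ c v = c u ∧ IsClassRep lt c v)).card : ℝ) := by
    intro u
    rw [Finset.card_filter]
    push_cast
    exact Finset.sum_congr rfl fun v _ => hterm u v
  -- pointwise bound on the inner sum
  have hbound : ∀ u ∈ S, (∑ v ∈ S, if h : IsArcPair G lt (v, u) then repVec G lt c ⟨(v, u), h⟩ else 0)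
      ≤ if u ∈ M then 0 else 1 := by
    intro u hu
    rw [hinner u]
    by_cases huM : u ∈ M
    · simp only [huM, if_true]
      have : S.filter (fun v => IsArcPair G lt (v, u) ∧ c v = c u ∧ IsClassRep lt c v) = ∅ := by
        rw [Finset.filter_eq_empty_iff]
        rintro v hv ⟨harc, hcvu, _⟩
        obtain ⟨i, -, hmi⟩ := Finset.mem_image.1 huM
        have hcu : c u = i.1 := by rw [← hmi]; exact (hm1 i.1 i.2).2
        have := hm2 i.1 i.2 v hv (hcvu.trans hcu)
        rw [hmi] at this
        rcases this with rfl | hltuv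
        · exact irrefl _ harc.1
        · exact asymm harc.1 hltuv
      rw [this]; simp
    · simp only [huM, if_false]
      have hcard : (S.filter (fun v => IsArcPair G lt (v, u) ∧ c v = c u ∧ IsClassRep lt c v)).card ≤ 1 := by
        rw [Finset.card_le_one]
        rintro a ha b hb
        obtain ⟨-, hca, hra⟩ := (Finset.mem_filter.1 ha).2
        obtain ⟨-, hcb, hrb⟩ := (Finset.mem_filter.1 hb).2
        have h1 := hra b (hcb.trans hca.symm)
        have h2 := hrb a (hca.trans hcb.symm)
        rcases h1 with rfl | h1
        · rfl
        rcases h2 with rfl | h2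
        · rfl
        exact absurd h1 (asymm h2)
      exact_mod_cast hcard
  -- sum the bound
  have hsum : (∑ u ∈ S, ∑ v ∈ S, if h : IsArcPair G lt (v, u) then repVec G lt c ⟨(v, u), h⟩ else 0)
      ≤ (S.card : ℝ) - M.card := by
    calc (∑ u ∈ S, ∑ v ∈ S, if h : IsArcPair G lt (v, u) then repVec G lt c ⟨(v, u), h⟩ else 0)
        ≤ ∑ u ∈ S, if u ∈ M then (0 : ℝ) else 1 := Finset.sum_le_sum hbound
      _ = ((S \ M).card : ℝ) := by
          rw [Finset.sdiff_eq_filter, Finset.card_filter]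
          push_cast
          exact Finset.sum_congr rfl fun u _ => by by_cases h : u ∈ M <;> simp [h]
      _ = (S.card : ℝ) - M.card := by
          rw [Finset.card_sdiff_of_subset hMS]
          have := Finset.card_le_card hMS
          push_cast [Nat.cast_sub this]
          ring
  -- chromatic number bound
  have hchrom : chromNum (G.induce (↑S : Set V)) ≤ T.card := by
    apply Nat.sInf_le
    refine ⟨fun v => T.toList.idxOf (c ↑v), ?_, ?_⟩
    · intro u v hadj heq
      have hGadj : G.Adj ↑u ↑v := hadj
      have hcneq : c ↑u ≠ c ↑v := hc _ _ hGadj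
      have hu : c ↑u ∈ T.toList := Finset.mem_toList.2 (Finset.mem_image_of_mem c (by exact_mod_cast u.2))
      have hv : c ↑v ∈ T.toList := Finset.mem_toList.2 (Finset.mem_image_of_mem c (by exact_mod_cast v.2))
      exact hcneq ((List.idxOf_inj hu).1 heq)
    · intro v
      have hv : c ↑v ∈ T.toList := Finset.mem_toList.2 (Finset.mem_image_of_mem c (by exact_mod_cast v.2))
      have := List.idxOf_lt_length_iff.2 hv
      rwa [Finset.length_toList] at this
  calc (∑ u ∈ S, ∑ v ∈ S, if h : IsArcPair G lt (v, u) then repVec G lt c ⟨(v, u), h⟩ else 0)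
      ≤ (S.card : ℝ) - M.card := hsum
    _ ≤ (S.card : ℝ) - chromNum (G.induce (↑S : Set V)) := by
        have : (chromNum (G.induce (↑S : Set V)) : ℝ) ≤ (M.card : ℝ) := by
          rw [hMcard]; exact_mod_cast hchrom
        linarith

/-- the internal inequality
`∑_{u∈S} ∑_{v∈S, v≺u, uv∉E} x_{(v,u)} ≤ |S| − χ(G[S])` is valid for `COL≺(G)`. -/
theorem statement8 {V : Type*} [Fintype V] [DecidableEq V]
    (G : SimpleGraph V) [DecidableRel G.Adj]
    (lt : V → V → Prop) [DecidableRel lt] (hlt : IsStrictTotalOrder V lt)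
    (S : Finset V) (x : Arc G lt → ℝ) (hx : x ∈ COL G lt) :
    (∑ u ∈ S, ∑ v ∈ S, if h : IsArcPair G lt (v, u) then x ⟨(v, u), h⟩ else 0) ≤
      (S.card : ℝ) - chromNum (G.induce (↑S : Set V)) := by
  have hlin : IsLinearMap ℝ (fun x : Arc G lt → ℝ =>
      ∑ u ∈ S, ∑ v ∈ S, if h : IsArcPair G lt (v, u) then x ⟨(v, u), h⟩ else 0) := by
    constructor
    · intro y z
      rw [← Finset.sum_add_distrib]
      refine Finset.sum_congr rfl fun u _ => ?_
      rw [← Finset.sum_add_distrib]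
      refine Finset.sum_congr rfl fun v _ => ?_
      split <;> simp
    · intro a y
      rw [Finset.smul_sum]
      refine Finset.sum_congr rfl fun u _ => ?_
      rw [Finset.smul_sum]
      refine Finset.sum_congr rfl fun v _ => ?_
      split <;> simp
  have hconv : Convex ℝ {x : Arc G lt → ℝ |
      (∑ u ∈ S, ∑ v ∈ S, if h : IsArcPair G lt (v, u) then x ⟨(v, u), h⟩ else 0) ≤
        (S.card : ℝ) - chromNum (G.induce (↑S : Set V))} :=
    convex_halfSpace_le hlin _
  have hsub : {x : Arc G lt → ℝ | ∃ c : V → ℕ, ProperColoring G c ∧ x = repVec G lt c} ⊆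
      {x : Arc G lt → ℝ |
      (∑ u ∈ S, ∑ v ∈ S, if h : IsArcPair G lt (v, u) then x ⟨(v, u), h⟩ else 0) ≤
        (S.card : ℝ) - chromNum (G.induce (↑S : Set V))} := by
    rintro y ⟨c, hc, rfl⟩
    exact key_lemma G lt hlt S c hc
  exact convexHull_min hsub hconv hx
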